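/- Define ℛ(N,h) = ∑_{n ≤ N} ∑_{q ≤ N, gcd(n,q) > 1} Λ(n) Λ̂_N(q) ( c_q(n+h) − c_q(n) c_q(h) / φ(q) ). Then for every ε > 0 and every fixed h ∈ ℕ one has ℛ(N,h) ≪_ε (N+h)^ε, i.e. there is a constant K (depending only on ε and h) with |ℛ(N,h)| ≤ K (N+h)^ε for all sufficiently large N ∈ ℕ. -/

import Mathlib

open Finset

/-- The Ramanujan sum `c_q(n) = ∑_{1 ≤ j ≤ q, gcd(j,q)=1} exp(2πi j n / q)`. -/
noncomputable def cq (q : ℕ) (n : ℤ) : ℂ :=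
  ∑ j ∈ (Finset.Icc 1 q).filter (fun j => Nat.Coprime j q),
    Complex.exp (2 * Real.pi * Complex.I * j * n / q)

/-- The incomplete von Mangoldt function `Λ_N(n) = -∑_{d ≤ N, d ∣ n} μ(d) log d`. -/
noncomputable def LamN (N n : ℕ) : ℝ :=
  -∑ d ∈ (Finset.Icc 1 N).filter (fun d => d ∣ n),
    (ArithmeticFunction.moebius d : ℝ) * Real.log d

/-- The correlation `C_{Λ,Λ_N}(N, n) = ∑_{m ≤ N} Λ(m) Λ_N(m + n)`. -/
noncomputable def corr (N n : ℕ) : ℝ :=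
  ∑ m ∈ Finset.Icc 1 N, ArithmeticFunction.vonMangoldt m * LamN N (m + n)

/-- The Ramanujan coefficient `Λ̂_N(q) = -(μ(q)/q) ∑_{d ≤ N/q, gcd(d,q)=1} μ(d) log(dq)/d`. -/
noncomputable def LamHat (N q : ℕ) : ℝ :=
  -((ArithmeticFunction.moebius q : ℝ) / q) *
    ∑ d ∈ (Finset.Icc 1 (N / q)).filter (fun d => Nat.Coprime d q),
      (ArithmeticFunction.moebius d : ℝ) * Real.log (d * q) / d

/-- `ℤ_q^* = {m ∈ ℕ ∩ [1,q] : gcd(m,q) = 1}`. -/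
def Zstar (q : ℕ) : Finset ℕ := (Finset.Icc 1 q).filter (fun m => Nat.Coprime m q)

/-- `ψ(N; q, k) = ∑_{n ≤ N, n ≡ k (mod q)} Λ(n)`. -/
noncomputable def psi (N q k : ℕ) : ℝ :=
  ∑ n ∈ (Finset.Icc 1 N).filter (fun n => n % q = k % q),
    ArithmeticFunction.vonMangoldt n

/-- `δ(h; q, k) = c_q(k+h) - (μ(q)/φ(q)) c_q(h)`. -/
noncomputable def dev (h q k : ℕ) : ℂ :=
  cq q ((k : ℤ) + h) - (ArithmeticFunction.moebius q : ℂ) / (Nat.totient q : ℂ) * cq q h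

/-- `Δ(N, h) = ∑_{q ≤ N} Λ̂_N(q) ∑_{k ∈ ℤ_q^*} ψ(N;q,k) δ(h;q,k)`. -/
noncomputable def Delta (N h : ℕ) : ℂ :=
  ∑ q ∈ Finset.Icc 1 N, (LamHat N q : ℂ) *
    ∑ k ∈ Zstar q, (psi N q k : ℂ) * dev h q k

/-- `S_N(q, k; r) = ∑_{n ≤ N, n ≡ k (mod q)} c_r(n)`. -/
noncomputable def SN (N q : ℕ) (k : ℤ) (r : ℕ) : ℂ :=
  ∑ n ∈ (Finset.Icc 1 N).filter (fun n : ℕ => (n : ℤ) % (q : ℤ) = k % (q : ℤ)), cq r n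

/-- The remainder term `ℛ(N,h)`. -/
noncomputable def RR (N h : ℕ) : ℂ :=
  ∑ n ∈ Finset.Icc 1 N, ∑ q ∈ (Finset.Icc 1 N).filter (fun q => 1 < Nat.gcd n q),
    (ArithmeticFunction.vonMangoldt n : ℂ) * (LamHat N q : ℂ) *
      (cq q ((n : ℤ) + h) - cq q (n : ℤ) * cq q (h : ℤ) / (Nat.totient q : ℂ))

section AuxLemmas
open ArithmeticFunction
open scoped ArithmeticFunction.Moebius ArithmeticFunction.zeta

lemma sum_exp_dvd (m : ℕ) (hm : 1 ≤ m) (y : ℤ) :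
    ∑ t ∈ Finset.Icc 1 m, Complex.exp (2 * Real.pi * Complex.I * t * y / m)
      = if (m : ℤ) ∣ y then (m : ℂ) else 0 := by
  have hm0 : (m : ℂ) ≠ 0 := Nat.cast_ne_zero.mpr (by omega)
  set z : ℂ := Complex.exp (2 * Real.pi * Complex.I * y / m) with hz
  have hterm : ∀ t : ℕ, Complex.exp (2 * Real.pi * Complex.I * t * y / m) = z ^ t := by
    intro t
    rw [hz, ← Complex.exp_nat_mul]
    ring_nf
  have hzm : z ^ m = 1 := by
    rw [hz, ← Complex.exp_nat_mul]
    have : (m : ℂ) * (2 * Real.pi * Complex.I * y / m) = y * (2 * Real.pi * Complex.I) := by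
      field_simp
    rw [this, Complex.exp_int_mul_two_pi_mul_I]
  by_cases hdvd : (m : ℤ) ∣ y
  · obtain ⟨k, rfl⟩ := hdvd
    have hz1 : z = 1 := by
      rw [hz]
      have : ((((m:ℤ) * k : ℤ) : ℂ)) = (m : ℂ) * (k : ℂ) := by push_cast; ring
      rw [this]
      have h2 : 2 * Real.pi * Complex.I * ((m:ℂ) * k) / m = k * (2 * Real.pi * Complex.I) := by
        field_simp
      rw [h2, Complex.exp_int_mul_two_pi_mul_I]
    rw [if_pos ⟨k, rfl⟩]
    simp only [hterm, hz1, one_pow, sum_const, Nat.card_Icc, smul_eq_mul, mul_one]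
    simp
  · rw [if_neg hdvd]
    have hz1 : z ≠ 1 := by
      intro h
      rw [hz, Complex.exp_eq_one_iff] at h
      obtain ⟨k, hk⟩ := h
      apply hdvd
      refine ⟨k, ?_⟩
      have : (y : ℂ) = m * k := by
        have h2 : (2 * (Real.pi:ℂ) * Complex.I) ≠ 0 := by
          simp [Real.pi_ne_zero, Complex.I_ne_zero, Complex.ofReal_ne_zero]
        have h3 : 2 * (Real.pi:ℂ) * Complex.I * y = 2 * (Real.pi:ℂ) * Complex.I * (m * k) := by
          have := congrArg (fun x => x * (m:ℂ)) hk
          rw [div_mul_cancel₀ _ hm0] at this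
          rw [this]; ring
        exact mul_left_cancel₀ h2 h3
      exact_mod_cast this
    calc ∑ t ∈ Finset.Icc 1 m, Complex.exp (2 * Real.pi * Complex.I * t * y / m)
        = ∑ t ∈ Finset.Icc 1 m, z ^ t := by simp_rw [hterm]
      _ = ∑ t ∈ Finset.range m, z ^ (t + 1) := by
          rw [Finset.sum_bij (fun t _ => t - 1)]
          · intro a ha; simp only [mem_Icc] at ha; simp only [mem_range]; omega
          · intro a ha b hb hab; simp only [mem_Icc] at ha hb; omega
          · intro b hb; simp only [mem_range] at hb; exact ⟨b+1, by simp [mem_Icc]; omega, by omega⟩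
          · intro a ha; simp only [mem_Icc] at ha; congr 1; omega
      _ = z * ∑ t ∈ Finset.range m, z ^ t := by rw [Finset.mul_sum]; congr 1; ext t; ring
      _ = z * ((z ^ m - 1) / (z - 1)) := by rw [geom_sum_eq hz1]
      _ = 0 := by rw [hzm]; simp

lemma moebius_indicator (n : ℕ) : ∑ d ∈ n.divisors, ((μ d : ℤ) : ℂ) = if n = 1 then 1 else 0 := by
  have h : ∑ d ∈ n.divisors, (μ d : ℤ) = (μ * ζ : ArithmeticFunction ℤ) n := by
    rw [coe_mul_zeta_apply]
  rw [moebius_mul_coe_zeta] at h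
  have h2 : ((∑ d ∈ n.divisors, (μ d : ℤ) : ℤ) : ℂ) = (((1 : ArithmeticFunction ℤ) n : ℤ) : ℂ) := by
    rw [h]
  push_cast at h2
  rw [h2, one_apply]
  split <;> simp

lemma cq_eq (q : ℕ) (hq : 1 ≤ q) (y : ℤ) :
    cq q y = ∑ d ∈ (Nat.divisors q).filter (fun d : ℕ => (d : ℤ) ∣ y),
      (d : ℂ) * ((μ (q / d) : ℤ) : ℂ) := by
  have hq0 : q ≠ 0 := by omega
  have step1 : cq q y = ∑ j ∈ Finset.Icc 1 q,
      (if Nat.gcd j q = 1 then Complex.exp (2 * Real.pi * Complex.I * j * y / q) else 0) := by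
    rw [cq, Finset.sum_filter]
  have step2 : ∀ j ∈ Finset.Icc 1 q,
      (if Nat.gcd j q = 1 then Complex.exp (2 * Real.pi * Complex.I * j * y / q) else 0)
      = ∑ d ∈ (q.divisors).filter (fun d => d ∣ j),
          ((μ d : ℤ) : ℂ) * Complex.exp (2 * Real.pi * Complex.I * j * y / q) := by
    intro j hj
    simp only [mem_Icc] at hj
    have hgcd0 : Nat.gcd j q ≠ 0 := Nat.gcd_ne_zero_right hq0
    have hdiv : (q.divisors).filter (fun d => d ∣ j) = (Nat.gcd j q).divisors := by
      ext d
      simp only [mem_filter, Nat.mem_divisors, Nat.dvd_gcd_iff]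
      tauto
    rw [hdiv, ← Finset.sum_mul, moebius_indicator]
    split <;> simp
  rw [step1, Finset.sum_congr rfl step2]
  rw [Finset.sum_comm' (s := Finset.Icc 1 q) (t' := q.divisors)
    (t := fun j => (q.divisors).filter (fun d => d ∣ j))
    (s' := fun d => (Finset.Icc 1 q).filter (fun j => d ∣ j))
    (by intro j d; simp only [mem_filter]; tauto)]
  have inner : ∀ d ∈ q.divisors,
      ∑ j ∈ (Finset.Icc 1 q).filter (fun j => d ∣ j),
        ((μ d : ℤ) : ℂ) * Complex.exp (2 * Real.pi * Complex.I * j * y / q)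
      = ((μ d : ℤ) : ℂ) * (if ((q / d : ℕ) : ℤ) ∣ y then ((q / d : ℕ) : ℂ) else 0) := by
    intro d hd
    rw [Nat.mem_divisors] at hd
    obtain ⟨hdq, _⟩ := hd
    have hd0 : d ≠ 0 := by
      rintro rfl; simp at hdq; omega
    have hqd : 1 ≤ q / d := Nat.one_le_div_iff (by omega) |>.mpr (Nat.le_of_dvd (by omega) hdq)
    rw [← Finset.mul_sum]
    congr 1
    rw [← sum_exp_dvd (q / d) hqd y]
    apply Finset.sum_bij (fun j _ => j / d)
    · intro a ha
      simp only [mem_filter, mem_Icc] at ha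
      obtain ⟨⟨h1, h2⟩, h3⟩ := ha
      simp only [mem_Icc]
      constructor
      · exact Nat.one_le_div_iff (by omega) |>.mpr (Nat.le_of_dvd (by omega) h3)
      · exact Nat.div_le_div_right h2
    · intro a ha b hb hab
      simp only [mem_filter, mem_Icc] at ha hb
      obtain ⟨-, ⟨c, rfl⟩⟩ := ha
      obtain ⟨-, ⟨e, rfl⟩⟩ := hb
      rw [Nat.mul_div_cancel_left c (by omega), Nat.mul_div_cancel_left e (by omega)] at hab
      rw [hab]
    · intro t ht
      simp only [mem_Icc] at ht
      refine ⟨d * t, ?_, ?_⟩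
      · simp only [mem_filter, mem_Icc]
        refine ⟨⟨by exact Nat.one_le_iff_ne_zero.mpr (by simp [hd0]; omega), ?_⟩, ⟨t, rfl⟩⟩
        calc d * t ≤ d * (q / d) := Nat.mul_le_mul_left d ht.2
          _ = q := Nat.mul_div_cancel' hdq
      · rw [Nat.mul_div_cancel_left t (by omega)]
    · intro j hj
      simp only [mem_filter, mem_Icc] at hj
      obtain ⟨⟨h1, h2⟩, ⟨c, rfl⟩⟩ := hj
      rw [Nat.mul_div_cancel_left c (by omega)]
      congr 1
      have hcast : ((q / d : ℕ) : ℂ) ≠ 0 := by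
        simp only [ne_eq, Nat.cast_eq_zero]; omega
      have hq' : (q : ℂ) = (d : ℂ) * ((q / d : ℕ) : ℂ) := by
        rw [← Nat.cast_mul, Nat.mul_div_cancel' hdq]
      push_cast
      rw [hq']
      have hdc : (d : ℂ) ≠ 0 := by simp only [ne_eq, Nat.cast_eq_zero]; omega
      field_simp
  rw [Finset.sum_congr rfl inner]
  have hswap : ∑ d ∈ q.divisors,
      ((μ d : ℤ) : ℂ) * (if ((q / d : ℕ) : ℤ) ∣ y then ((q / d : ℕ) : ℂ) else 0)
      = ∑ d ∈ q.divisors,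
      ((μ (q / d) : ℤ) : ℂ) * (if ((d : ℕ) : ℤ) ∣ y then ((d : ℕ) : ℂ) else 0) := by
    rw [← Nat.sum_div_divisors q (fun d =>
      ((μ (q / d) : ℤ) : ℂ) * (if ((d : ℕ) : ℤ) ∣ y then ((d : ℕ) : ℂ) else 0))]
    apply Finset.sum_congr rfl
    intro d hd
    rw [Nat.mem_divisors] at hd
    rw [Nat.div_div_self hd.1 hd.2]
  rw [hswap, Finset.sum_filter]
  apply Finset.sum_congr rfl
  intro d _
  split <;> ring

lemma cq_abs_le (q : ℕ) (hq : 1 ≤ q) (y : ℤ) :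
    ‖(cq q y)‖ ≤ ∑ d ∈ (Nat.divisors q).filter (fun d : ℕ => (d : ℤ) ∣ y), (d : ℝ) := by
  rw [cq_eq q hq y]
  refine (norm_sum_le _ _).trans (Finset.sum_le_sum ?_)
  intro d _
  rw [norm_mul]
  have h1 : ‖(d : ℂ)‖ = (d : ℝ) := by
    rw [Complex.norm_natCast]
  have h2 : ‖((μ (q / d) : ℤ) : ℂ)‖ ≤ 1 := by
    rw [Complex.norm_intCast]
    have := abs_moebius_le_one (n := q / d)
    exact_mod_cast this
  calc ‖(d : ℂ)‖ * ‖((μ (q / d) : ℤ) : ℂ)‖ ≤ (d : ℝ) * 1 := by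
        rw [h1]; exact mul_le_mul_of_nonneg_left h2 (Nat.cast_nonneg d)
    _ = (d : ℝ) := mul_one _

lemma sum_inv_Icc_le (M : ℕ) : ∑ d ∈ Finset.Icc 1 M, (d : ℝ)⁻¹ ≤ 1 + Real.log M := by
  have h1 : ∑ d ∈ Finset.Icc 1 M, (d : ℝ)⁻¹ = (harmonic M : ℝ) := by
    rw [harmonic]
    push_cast
    rw [Finset.sum_bij (fun (d : ℕ) _ => d - 1)]
    · intro a ha; simp only [mem_Icc] at ha; simp only [mem_range]; omega
    · intro a ha b hb hab; simp only [mem_Icc] at ha hb; omega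
    · intro b hb; simp only [mem_range] at hb
      exact ⟨b + 1, by simp only [mem_Icc]; omega, by omega⟩
    · intro a ha; simp only [mem_Icc] at ha
      have h : ((a - 1 : ℕ) : ℝ) + 1 = (a : ℝ) := by
        have : a - 1 + 1 = a := by omega
        exact_mod_cast congrArg (Nat.cast : ℕ → ℝ) this
      rw [h]
  rw [h1]
  exact_mod_cast harmonic_le_one_add_log M

lemma LamHat_abs_le (N q : ℕ) (hq : 1 ≤ q) (hN : 1 ≤ N) :
    |LamHat N q| ≤ (1 + Real.log N) ^ 2 / q := by
  have hlogN : 0 ≤ Real.log N := Real.log_natCast_nonneg N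
  rw [LamHat, abs_mul, abs_neg, abs_div]
  have hmu : |(μ q : ℝ)| ≤ 1 := by exact_mod_cast (abs_moebius_le_one (n := q))
  have habsq : |(q : ℝ)| = (q : ℝ) := abs_of_nonneg (Nat.cast_nonneg q)
  have hsum : |∑ d ∈ (Finset.Icc 1 (N / q)).filter (fun d => Nat.Coprime d q),
      (μ d : ℝ) * Real.log (d * q) / d| ≤ (1 + Real.log N) * (1 + Real.log N) := by
    refine (Finset.abs_sum_le_sum_abs _ _).trans ?_
    have hterm : ∀ d ∈ (Finset.Icc 1 (N / q)).filter (fun d => Nat.Coprime d q),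
        |(μ d : ℝ) * Real.log (d * q) / d| ≤ Real.log N / d := by
      intro d hd
      simp only [mem_filter, mem_Icc] at hd
      obtain ⟨⟨hd1, hd2⟩, -⟩ := hd
      have hdq : (d : ℕ) * q ≤ N := by
        calc d * q ≤ (N / q) * q := Nat.mul_le_mul_right q hd2
          _ ≤ N := Nat.div_mul_le_self N q
      have hlog1 : 0 ≤ Real.log ((d : ℝ) * q) := by
        apply Real.log_nonneg
        have : (1 : ℝ) ≤ (d : ℝ) := by exact_mod_cast hd1
        have : (1 : ℝ) ≤ (q : ℝ) := by exact_mod_cast hq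
        nlinarith
      have hlog2 : Real.log ((d : ℝ) * q) ≤ Real.log N := by
        apply Real.log_le_log (by positivity)
        exact_mod_cast hdq
      rw [abs_div, abs_mul]
      have h1 : |(μ d : ℝ)| ≤ 1 := by exact_mod_cast (abs_moebius_le_one (n := d))
      have h2 : |Real.log ((d:ℝ) * q)| = Real.log ((d:ℝ)*q) := abs_of_nonneg hlog1
      have h3 : |(d : ℝ)| = (d : ℝ) := abs_of_nonneg (Nat.cast_nonneg d)
      rw [h3]
      push_cast
      rw [h2]
      have hd0 : (0:ℝ) < d := by exact_mod_cast hd1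
      have hlogN' : Real.log ((d:ℝ) * q) ≤ Real.log N := hlog2
      have : |(μ d : ℝ)| * Real.log ((d:ℝ) * q) ≤ Real.log N := by
        calc |(μ d : ℝ)| * Real.log ((d:ℝ) * q) ≤ 1 * Real.log ((d:ℝ) * q) :=
              mul_le_mul_of_nonneg_right h1 hlog1
          _ = Real.log ((d:ℝ) * q) := one_mul _
          _ ≤ Real.log N := hlog2
      gcongr
    calc ∑ d ∈ (Finset.Icc 1 (N / q)).filter (fun d => Nat.Coprime d q),
        |(μ d : ℝ) * Real.log (d * q) / d| ≤
        ∑ d ∈ (Finset.Icc 1 (N / q)).filter (fun d => Nat.Coprime d q), Real.log N / d :=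
          Finset.sum_le_sum hterm
      _ ≤ ∑ d ∈ Finset.Icc 1 (N / q), Real.log N / d := by
          apply Finset.sum_le_sum_of_subset_of_nonneg (Finset.filter_subset _ _)
          intro d hd _
          positivity
      _ = Real.log N * ∑ d ∈ Finset.Icc 1 (N / q), (d : ℝ)⁻¹ := by
          rw [Finset.mul_sum]; apply Finset.sum_congr rfl; intro d _; rw [div_eq_mul_inv]
      _ ≤ Real.log N * (1 + Real.log (N / q : ℕ)) := by
          apply mul_le_mul_of_nonneg_left (sum_inv_Icc_le _) hlogN
      _ ≤ Real.log N * (1 + Real.log N) := by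
          apply mul_le_mul_of_nonneg_left _ hlogN
          have : ((N / q : ℕ) : ℝ) ≤ (N : ℝ) := by exact_mod_cast Nat.div_le_self N q
          have h0 : (0:ℝ) ≤ (N / q : ℕ) := Nat.cast_nonneg _
          rcases eq_or_lt_of_le h0 with h | h
          · rw [← h, Real.log_zero]; linarith
          · linarith [Real.log_le_log h this]
      _ ≤ (1 + Real.log N) * (1 + Real.log N) := by nlinarith
  have hq0 : (0:ℝ) < q := by exact_mod_cast hq
  calc |(μ q : ℝ)| / |(q:ℝ)| * |∑ d ∈ (Finset.Icc 1 (N / q)).filter (fun d => Nat.Coprime d q),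
        (μ d : ℝ) * Real.log (d * q) / d|
      ≤ (1 / q) * ((1 + Real.log N) * (1 + Real.log N)) := by
        apply mul_le_mul
        · rw [habsq]
          gcongr
        · exact hsum
        · exact abs_nonneg _
        · positivity
    _ = (1 + Real.log N) ^ 2 / q := by ring

lemma sum_inv_multiples (N k : ℕ) (hk : 1 ≤ k) :
    ∑ q ∈ (Finset.Icc 1 N).filter (fun q => k ∣ q), (q : ℝ)⁻¹ ≤ (1 + Real.log N) / k := by
  have h1 : ∑ q ∈ (Finset.Icc 1 N).filter (fun q => k ∣ q), (q : ℝ)⁻¹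
      = ∑ t ∈ Finset.Icc 1 (N / k), ((k * t : ℕ) : ℝ)⁻¹ := by
    apply Finset.sum_bij (fun q _ => q / k)
    · intro q hq
      simp only [mem_filter, mem_Icc] at hq
      obtain ⟨⟨h1, h2⟩, h3⟩ := hq
      simp only [mem_Icc]
      exact ⟨Nat.one_le_div_iff (by omega) |>.mpr (Nat.le_of_dvd (by omega) h3),
        Nat.div_le_div_right h2⟩
    · intro a ha b hb hab
      simp only [mem_filter, mem_Icc] at ha hb
      obtain ⟨-, ⟨c, rfl⟩⟩ := ha
      obtain ⟨-, ⟨e, rfl⟩⟩ := hb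
      rw [Nat.mul_div_cancel_left c (by omega), Nat.mul_div_cancel_left e (by omega)] at hab
      rw [hab]
    · intro t ht
      simp only [mem_Icc] at ht
      refine ⟨k * t, ?_, by rw [Nat.mul_div_cancel_left t (by omega)]⟩
      simp only [mem_filter, mem_Icc]
      refine ⟨⟨by nlinarith [ht.1], ?_⟩, ⟨t, rfl⟩⟩
      calc k * t ≤ k * (N / k) := Nat.mul_le_mul_left k ht.2
        _ ≤ N := Nat.mul_div_le N k
    · intro q hq
      simp only [mem_filter, mem_Icc] at hq
      obtain ⟨-, ⟨c, rfl⟩⟩ := hq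
      rw [Nat.mul_div_cancel_left c (by omega)]
  rw [h1]
  have h2 : ∑ t ∈ Finset.Icc 1 (N / k), ((k * t : ℕ) : ℝ)⁻¹
      = (k : ℝ)⁻¹ * ∑ t ∈ Finset.Icc 1 (N / k), (t : ℝ)⁻¹ := by
    rw [Finset.mul_sum]
    apply Finset.sum_congr rfl
    intro t _
    push_cast
    rw [mul_inv]
  rw [h2, div_eq_inv_mul]
  have hk0 : (0:ℝ) < k := by exact_mod_cast hk
  apply mul_le_mul_of_nonneg_left _ (by positivity)
  refine (sum_inv_Icc_le _).trans ?_
  have h3 : ((N / k : ℕ) : ℝ) ≤ (N : ℝ) := by exact_mod_cast Nat.div_le_self N k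
  rcases Nat.eq_zero_or_pos (N / k) with h | h
  · simp [h]
    exact Real.log_natCast_nonneg N
  · have : (0:ℝ) < ((N / k : ℕ) : ℝ) := by exact_mod_cast h
    linarith [Real.log_le_log this h3]

lemma one_add_log_le (δ : ℝ) (hδ : 0 < δ) :
    ∃ C : ℝ, 1 ≤ C ∧ ∀ x : ℝ, 1 ≤ x → 1 + Real.log x ≤ C * x ^ δ := by
  refine ⟨1 + 1 / δ, by nlinarith [one_div_pos.mpr hδ], ?_⟩
  intro x hx
  have hx0 : (0:ℝ) < x := by linarith
  have hxd : (1:ℝ) ≤ x ^ δ := Real.one_le_rpow hx (le_of_lt hδ)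
  have hlog : Real.log x ≤ x ^ δ / δ := by
    have h1 : Real.log (x ^ δ) = δ * Real.log x := Real.log_rpow hx0 δ
    have h2 : Real.log (x ^ δ) ≤ x ^ δ - 1 := by
      have := Real.log_le_sub_one_of_pos (x := x ^ δ) (by positivity)
      linarith
    rw [h1] at h2
    rw [div_eq_inv_mul]
    have : δ * Real.log x ≤ x ^ δ := by linarith
    calc Real.log x = δ⁻¹ * (δ * Real.log x) := by field_simp
      _ ≤ δ⁻¹ * x ^ δ := by
          apply mul_le_mul_of_nonneg_left this (by positivity)
  calc 1 + Real.log x ≤ 1 + x ^ δ / δ := by linarith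
    _ ≤ (1 + 1/δ) * x ^ δ := by
        have : (1:ℝ) * 1 ≤ 1 * x ^ δ := by nlinarith
        rw [add_mul]
        have h1 : x ^ δ / δ = (1/δ) * x ^ δ := by ring
        rw [h1]
        nlinarith [hxd]

lemma card_divisors_le (δ : ℝ) (hδ : 0 < δ) :
    ∃ C : ℝ, 1 ≤ C ∧ ∀ y : ℕ, 1 ≤ y → ((y.divisors.card : ℕ) : ℝ) ≤ C * (y : ℝ) ^ δ := by
  classical
  set B : ℝ := 1 + 1 / (δ * Real.log 2) with hB
  have hlog2 : (0:ℝ) < Real.log 2 := Real.log_pos (by norm_num)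
  have hB1 : 1 ≤ B := by
    have h : 0 < 1 / (δ * Real.log 2) := by positivity
    rw [hB]; linarith
  set M : ℕ := ⌈(2:ℝ) ^ (1/δ)⌉₊ with hM
  refine ⟨B ^ M, one_le_pow₀ hB1, ?_⟩
  intro y hy
  have hy0 : y ≠ 0 := by omega
  set S := y.primeFactors with hS
  set e : ℕ → ℕ := fun p => y.factorization p with he
  have hcard : (y.divisors.card : ℝ) = ∏ p ∈ S, ((e p : ℝ) + 1) := by
    rw [Nat.card_divisors hy0]
    push_cast
    rfl
  have hyprod : (y : ℝ) = ∏ p ∈ S, ((p ^ (e p) : ℕ) : ℝ) := by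
    conv_lhs => rw [← Nat.factorization_prod_pow_eq_self hy0]
    rw [Finsupp.prod]
    push_cast
    rfl
  set f : ℕ → ℝ := fun p => ((p ^ (e p) : ℕ) : ℝ) with hf
  have hfpos : ∀ p ∈ S, 0 < f p := by
    intro p hp
    have hp2 : 2 ≤ p := (Nat.prime_of_mem_primeFactors hp).two_le
    have h : 0 < p ^ (e p) := Nat.pow_pos (by omega)
    show (0:ℝ) < ((p ^ e p : ℕ) : ℝ)
    exact_mod_cast h
  have hydelta : (y : ℝ) ^ δ = ∏ p ∈ S, (f p) ^ δ := by
    rw [hyprod, ← Real.finset_prod_rpow S f (fun p hp => (hfpos p hp).le) δ]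
  -- per-prime bounds
  have hppos : ∀ p ∈ S, 2 ≤ p := fun p hp => (Nat.prime_of_mem_primeFactors hp).two_le
  have hepos : ∀ p ∈ S, 1 ≤ e p := by
    intro p hp
    exact (Nat.Prime.factorization_pos_of_dvd (Nat.prime_of_mem_primeFactors hp) hy0
      (Nat.dvd_of_mem_primeFactors hp))
  have key1 : ∀ p ∈ S, ((e p : ℝ) + 1) ≤ B * (f p) ^ δ := by
    intro p hp
    have hp2 : 2 ≤ p := hppos p hp
    have h2e : ((2:ℝ) ^ (e p)) ≤ (p:ℝ) ^ (e p) := by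
      apply pow_le_pow_left₀ (by norm_num)
      exact_mod_cast hp2
    have hfp : f p = (p : ℝ) ^ (e p) := by rw [hf]; push_cast; ring
    have hmono : ((2:ℝ) ^ (e p)) ^ δ ≤ (f p) ^ δ := by
      rw [hfp]
      exact Real.rpow_le_rpow (by positivity) h2e (le_of_lt hδ)
    have hexp : ((2:ℝ) ^ (e p)) ^ δ = Real.exp (δ * ((e p : ℝ) * Real.log 2)) := by
      rw [Real.rpow_def_of_pos (by positivity), Real.log_pow]
      ring_nf
    have hlb : 1 + δ * ((e p : ℝ) * Real.log 2) ≤ ((2:ℝ) ^ (e p)) ^ δ := by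
      rw [hexp]
      have := Real.add_one_le_exp (δ * ((e p : ℝ) * Real.log 2))
      linarith
    have hBdl : B * (δ * Real.log 2) = δ * Real.log 2 + 1 := by
      have hne : δ * Real.log 2 ≠ 0 := by positivity
      rw [hB]
      field_simp
    have hee : (0:ℝ) ≤ (e p : ℝ) := Nat.cast_nonneg _
    have : B * (1 + δ * ((e p : ℝ) * Real.log 2)) ≥ (e p : ℝ) + 1 := by
      have expand : B * (1 + δ * ((e p : ℝ) * Real.log 2))
          = B + (e p : ℝ) * (B * (δ * Real.log 2)) := by ring
      rw [expand, hBdl]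
      nlinarith [mul_nonneg hee (le_of_lt (mul_pos hδ hlog2))]
    calc ((e p : ℝ) + 1) ≤ B * (1 + δ * ((e p : ℝ) * Real.log 2)) := this
      _ ≤ B * (((2:ℝ) ^ (e p)) ^ δ) := by
          apply mul_le_mul_of_nonneg_left hlb (by linarith)
      _ ≤ B * (f p) ^ δ := by
          apply mul_le_mul_of_nonneg_left hmono (by linarith)
  have key2 : ∀ p ∈ S, M < p → ((e p : ℝ) + 1) ≤ (f p) ^ δ := by
    intro p hp hpM
    have h2d : (2:ℝ) ≤ (p:ℝ) ^ δ := by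
      have h1 : (2:ℝ) ^ (1/δ) ≤ (M:ℝ) := Nat.le_ceil _
      have h2 : (M:ℝ) ≤ (p:ℝ) := by exact_mod_cast le_of_lt hpM
      have h3 : ((2:ℝ) ^ (1/δ)) ^ δ ≤ (p:ℝ) ^ δ :=
        Real.rpow_le_rpow (by positivity) (le_trans h1 h2) (le_of_lt hδ)
      rw [← Real.rpow_mul (by norm_num), one_div, inv_mul_cancel₀ (ne_of_gt hδ),
        Real.rpow_one] at h3
      exact h3
    have hfp : f p = (p : ℝ) ^ (e p) := by rw [hf]; push_cast; ring
    have hfd : (f p) ^ δ = ((p:ℝ) ^ δ) ^ (e p) := by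
      rw [hfp, ← Real.rpow_natCast (p:ℝ) (e p), ← Real.rpow_mul (Nat.cast_nonneg p),
        mul_comm, Real.rpow_mul (Nat.cast_nonneg p), Real.rpow_natCast]
    rw [hfd]
    have h2e : ((2:ℝ) ^ (e p)) ≤ ((p:ℝ) ^ δ) ^ (e p) := pow_le_pow_left₀ (by norm_num) h2d _
    have hcast : ((e p : ℝ) + 1) ≤ (2:ℝ) ^ (e p) := by
      have := Nat.lt_two_pow_self (n := e p)
      have h : e p + 1 ≤ 2 ^ (e p) := this
      exact_mod_cast h
    linarith
  -- assemble
  rw [hcard, hydelta]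
  rw [← Finset.prod_filter_mul_prod_filter_not S (fun p => p ≤ M) (fun p => ((e p : ℝ) + 1))]
  rw [← Finset.prod_filter_mul_prod_filter_not S (fun p => p ≤ M) (fun p => (f p) ^ δ)]
  have hsmall : ∏ p ∈ S.filter (fun p => p ≤ M), ((e p : ℝ) + 1)
      ≤ (B ^ M) * ∏ p ∈ S.filter (fun p => p ≤ M), (f p) ^ δ := by
    calc ∏ p ∈ S.filter (fun p => p ≤ M), ((e p : ℝ) + 1)
        ≤ ∏ p ∈ S.filter (fun p => p ≤ M), (B * (f p) ^ δ) := by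
          apply Finset.prod_le_prod
          · intro p _; positivity
          · intro p hp; exact key1 p (Finset.mem_of_mem_filter p hp)
      _ = B ^ (S.filter (fun p => p ≤ M)).card * ∏ p ∈ S.filter (fun p => p ≤ M), (f p) ^ δ := by
          rw [Finset.prod_mul_distrib, Finset.prod_const]
      _ ≤ (B ^ M) * ∏ p ∈ S.filter (fun p => p ≤ M), (f p) ^ δ := by
          apply mul_le_mul_of_nonneg_right
          · apply pow_le_pow_right₀ hB1
            calc (S.filter (fun p => p ≤ M)).card ≤ (Finset.Icc 1 M).card := by
                  apply Finset.card_le_card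
                  intro p hp
                  simp only [mem_filter] at hp
                  simp only [mem_Icc]
                  exact ⟨by have := hppos p hp.1; omega, hp.2⟩
              _ = M := by rw [Nat.card_Icc]; omega
          · apply Finset.prod_nonneg
            intro p hp
            positivity
  have hlarge : ∏ p ∈ S.filter (fun p => ¬ p ≤ M), ((e p : ℝ) + 1)
      ≤ ∏ p ∈ S.filter (fun p => ¬ p ≤ M), (f p) ^ δ := by
    apply Finset.prod_le_prod
    · intro p _; positivity
    · intro p hp
      simp only [mem_filter, not_le] at hp
      exact key2 p hp.1 hp.2
  calc (∏ p ∈ S.filter (fun p => p ≤ M), ((e p : ℝ) + 1)) *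
        ∏ p ∈ S.filter (fun p => ¬ p ≤ M), ((e p : ℝ) + 1)
      ≤ ((B ^ M) * ∏ p ∈ S.filter (fun p => p ≤ M), (f p) ^ δ) *
        ∏ p ∈ S.filter (fun p => ¬ p ≤ M), (f p) ^ δ := by
        apply mul_le_mul hsmall hlarge
        · apply Finset.prod_nonneg; intro p _; positivity
        · apply mul_nonneg (by positivity)
          apply Finset.prod_nonneg; intro p hp; positivity
    _ = B ^ M * ((∏ p ∈ S.filter (fun p => p ≤ M), (f p) ^ δ) *
        ∏ p ∈ S.filter (fun p => ¬ p ≤ M), (f p) ^ δ) := by ring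

lemma swap_bound (N p y : ℕ) (hp : p.Prime) (hy : 1 ≤ y) :
    ∑ q ∈ (Finset.Icc 1 N).filter (fun q => p ∣ q),
      (q : ℝ)⁻¹ * (∑ d ∈ (Nat.divisors q).filter (fun d : ℕ => d ∣ y), (d : ℝ))
    ≤ (y.divisors.card : ℝ) * (1 + Real.log N) * (if p ∣ y then 1 else (p : ℝ)⁻¹) := by
  classical
  have hy0 : y ≠ 0 := by omega
  have hstep : ∀ q ∈ (Finset.Icc 1 N).filter (fun q => p ∣ q),
      (q : ℝ)⁻¹ * (∑ d ∈ (Nat.divisors q).filter (fun d : ℕ => d ∣ y), (d : ℝ))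
      = ∑ d ∈ y.divisors, (if d ∣ q then (d : ℝ) * (q : ℝ)⁻¹ else 0) := by
    intro q hq
    simp only [mem_filter, mem_Icc] at hq
    have hq0 : q ≠ 0 := by omega
    have hset : (Nat.divisors q).filter (fun d : ℕ => d ∣ y)
        = (y.divisors).filter (fun d : ℕ => d ∣ q) := by
      ext d
      simp only [mem_filter, Nat.mem_divisors]
      tauto
    rw [hset, Finset.mul_sum, ← Finset.sum_filter]
    apply Finset.sum_congr rfl
    intro d _
    ring
  rw [Finset.sum_congr rfl hstep, Finset.sum_comm]
  have hinner : ∀ d ∈ y.divisors,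
      ∑ q ∈ (Finset.Icc 1 N).filter (fun q => p ∣ q), (if d ∣ q then (d : ℝ) * (q : ℝ)⁻¹ else 0)
      ≤ (1 + Real.log N) * (if p ∣ y then 1 else (p : ℝ)⁻¹) := by
    intro d hd
    rw [Nat.mem_divisors] at hd
    obtain ⟨hdy, -⟩ := hd
    have hd0 : d ≠ 0 := by rintro rfl; exact hy0 (zero_dvd_iff.mp hdy)
    have hl0 : 1 ≤ Nat.lcm p d := Nat.pos_of_ne_zero (Nat.lcm_ne_zero hp.pos.ne' hd0)
    have hcomb : ∑ q ∈ (Finset.Icc 1 N).filter (fun q => p ∣ q),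
        (if d ∣ q then (d : ℝ) * (q : ℝ)⁻¹ else 0)
        = (d : ℝ) * ∑ q ∈ (Finset.Icc 1 N).filter (fun q => Nat.lcm p d ∣ q), (q : ℝ)⁻¹ := by
      rw [Finset.sum_filter, Finset.mul_sum, Finset.sum_filter]
      apply Finset.sum_congr rfl
      intro q _
      by_cases h1 : p ∣ q <;> by_cases h2 : d ∣ q <;>
        simp [h1, h2, Nat.lcm_dvd_iff, mul_comm] <;> tauto
    rw [hcomb]
    have hmul := sum_inv_multiples N (Nat.lcm p d) hl0
    have hd0' : (0:ℝ) < d := by exact_mod_cast Nat.pos_of_ne_zero hd0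
    have hlogN : (0:ℝ) ≤ 1 + Real.log N := by
      have := Real.log_natCast_nonneg N; linarith
    calc (d : ℝ) * ∑ q ∈ (Finset.Icc 1 N).filter (fun q => Nat.lcm p d ∣ q), (q : ℝ)⁻¹
        ≤ (d : ℝ) * ((1 + Real.log N) / Nat.lcm p d) := by
          apply mul_le_mul_of_nonneg_left hmul (by positivity)
      _ = (1 + Real.log N) * ((d : ℝ) / Nat.lcm p d) := by ring
      _ ≤ (1 + Real.log N) * (if p ∣ y then 1 else (p : ℝ)⁻¹) := by
          apply mul_le_mul_of_nonneg_left _ hlogN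
          by_cases hpy : p ∣ y
          · rw [if_pos hpy]
            have : (d:ℕ) ≤ Nat.lcm p d := Nat.le_of_dvd (by omega) (Nat.dvd_lcm_right p d)
            have hl0' : (0:ℝ) < (Nat.lcm p d : ℝ) := by exact_mod_cast hl0
            rw [div_le_one hl0']
            exact_mod_cast this
          · rw [if_neg hpy]
            have hpd : ¬ p ∣ d := fun hc => hpy (hc.trans hdy)
            have hcop : Nat.Coprime p d := (Nat.Prime.coprime_iff_not_dvd hp).mpr hpd
            have hlcm : Nat.lcm p d = p * d := Nat.Coprime.lcm_eq_mul hcop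
            rw [hlcm]
            push_cast
            have hp0 : (0:ℝ) < p := by exact_mod_cast hp.pos
            rw [div_eq_mul_inv, mul_inv]
            rw [mul_comm ((p:ℝ))⁻¹ ((d:ℝ))⁻¹, ← mul_assoc, mul_inv_cancel₀ (ne_of_gt hd0'), one_mul]
  calc ∑ d ∈ y.divisors, ∑ q ∈ (Finset.Icc 1 N).filter (fun q => p ∣ q),
        (if d ∣ q then (d : ℝ) * (q : ℝ)⁻¹ else 0)
      ≤ ∑ d ∈ y.divisors, (1 + Real.log N) * (if p ∣ y then 1 else (p : ℝ)⁻¹) :=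
        Finset.sum_le_sum hinner
    _ = (y.divisors.card : ℝ) * (1 + Real.log N) * (if p ∣ y then 1 else (p : ℝ)⁻¹) := by
        rw [Finset.sum_const, nsmul_eq_mul]; ring

lemma cq_abs_nat (q y : ℕ) (hq : 1 ≤ q) :
    ‖(cq q (y : ℤ))‖ ≤ ∑ d ∈ (Nat.divisors q).filter (fun d : ℕ => d ∣ y), (d : ℝ) := by
  refine (cq_abs_le q hq y).trans (le_of_eq ?_)
  congr 1
  apply Finset.filter_congr
  intro d _
  simp [Int.natCast_dvd_natCast]

lemma cq_abs_h_le (q h : ℕ) (hq : 1 ≤ q) (hh : 1 ≤ h) :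
    ‖(cq q (h : ℤ))‖ ≤ (h : ℝ) * h := by
  refine (cq_abs_nat q h hq).trans ?_
  have hsub : (Nat.divisors q).filter (fun d : ℕ => d ∣ h) ⊆ Finset.Icc 1 h := by
    intro d hd
    simp only [mem_filter, Nat.mem_divisors] at hd
    simp only [mem_Icc]
    have hd0 : d ≠ 0 := fun h0 => by
      rw [h0] at hd
      exact absurd (zero_dvd_iff.mp hd.2) (by omega)
    exact ⟨by omega, Nat.le_of_dvd (by omega) hd.2⟩
  calc ∑ d ∈ (Nat.divisors q).filter (fun d : ℕ => d ∣ h), (d : ℝ)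
      ≤ ∑ d ∈ Finset.Icc 1 h, (d : ℝ) := by
        apply Finset.sum_le_sum_of_subset_of_nonneg hsub
        intro d _ _; positivity
    _ ≤ ∑ d ∈ Finset.Icc 1 h, (h : ℝ) := by
        apply Finset.sum_le_sum
        intro d hd
        simp only [mem_Icc] at hd
        exact_mod_cast hd.2
    _ = (Finset.Icc 1 h).card * (h:ℝ) := by rw [Finset.sum_const, nsmul_eq_mul]
    _ = (h:ℝ) * h := by rw [Nat.card_Icc]; simp

lemma cq_abs_pp_le (q p a : ℕ) (hq : 1 ≤ q) (hsq : Squarefree q) (hp : p.Prime) :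
    ‖(cq q ((p ^ a : ℕ) : ℤ))‖ ≤ 1 + (p : ℝ) := by
  refine (cq_abs_nat q (p ^ a) hq).trans ?_
  have hsub : (Nat.divisors q).filter (fun d : ℕ => d ∣ p ^ a) ⊆ {1, p} := by
    intro d hd
    simp only [mem_filter, Nat.mem_divisors] at hd
    obtain ⟨⟨hdq, hq0⟩, hdpa⟩ := hd
    obtain ⟨i, hi, rfl⟩ := (Nat.dvd_prime_pow hp).mp hdpa
    have hsd : Squarefree (p ^ i) := hsq.squarefree_of_dvd hdq
    have hi1 : i ≤ 1 := by
      by_contra hcon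
      have : p * p ∣ p ^ i := by
        have : p ^ 2 ∣ p ^ i := pow_dvd_pow p (by omega)
        simpa [sq] using this
      exact hp.one_lt.ne' (Nat.isUnit_iff.mp (hsd p this))
    interval_cases i
    · simp
    · simp
  calc ∑ d ∈ (Nat.divisors q).filter (fun d : ℕ => d ∣ p ^ a), (d : ℝ)
      ≤ ∑ d ∈ ({1, p} : Finset ℕ), (d : ℝ) := by
        apply Finset.sum_le_sum_of_subset_of_nonneg hsub
        intro d _ _; positivity
    _ = 1 + (p : ℝ) := by
        rw [Finset.sum_pair hp.ne_one.symm]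
        simp

lemma totient_ge (q p : ℕ) (hq : 1 ≤ q) (hp : p.Prime) (hpq : p ∣ q) :
    (p : ℝ) - 1 ≤ (Nat.totient q : ℝ) := by
  have h1 : Nat.totient p ∣ Nat.totient q := Nat.totient_dvd_of_dvd hpq
  have h2 : Nat.totient p = p - 1 := Nat.totient_prime hp
  have h3 : 0 < Nat.totient q := Nat.totient_pos.mpr (by omega)
  have h4 : Nat.totient p ≤ Nat.totient q := Nat.le_of_dvd h3 h1
  rw [h2] at h4
  have : (p:ℝ) - 1 = ((p - 1 : ℕ) : ℝ) := by
    have := hp.two_le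
    push_cast [Nat.cast_sub (by omega : 1 ≤ p)]
    ring
  rw [this]
  exact_mod_cast h4

lemma primepow_struct (n : ℕ) (hn : IsPrimePow n) :
    n.minFac.Prime ∧ 1 ≤ n.factorization n.minFac ∧ n = n.minFac ^ (n.factorization n.minFac) := by
  obtain ⟨p, k, hp, hk, rfl⟩ := (isPrimePow_nat_iff _).mp hn
  have hmin : (p ^ k).minFac = p := Nat.Prime.pow_minFac hp (by omega)
  rw [hmin]
  refine ⟨hp, ?_, ?_⟩
  · rw [hp.factorization_pow]
    simp
    omega
  · rw [hp.factorization_pow]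
    simp

lemma mem_product_of_pp {N n : ℕ} (hN : 1 ≤ N) (hn : IsPrimePow n) (h1 : 1 ≤ n) (h2 : n ≤ N) :
    n.minFac ≤ N ∧ 1 ≤ n.factorization n.minFac ∧ n.factorization n.minFac ≤ Nat.log 2 N := by
  obtain ⟨hp, ha, hrep⟩ := primepow_struct n hn
  refine ⟨?_, ha, ?_⟩
  · calc n.minFac ≤ n := Nat.minFac_le (by omega)
      _ ≤ N := h2
  · have h2a : 2 ^ (n.factorization n.minFac) ≤ N := by
      calc 2 ^ (n.factorization n.minFac) ≤ n.minFac ^ (n.factorization n.minFac) :=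
            Nat.pow_le_pow_left hp.two_le _
        _ = n := hrep.symm
        _ ≤ N := h2
    exact (Nat.le_log_iff_pow_le (by norm_num) (by omega)).mpr h2a

lemma injOn_pp (s : Finset ℕ) (hs : ∀ n ∈ s, IsPrimePow n) :
    Set.InjOn (fun n : ℕ => (n.minFac, n.factorization n.minFac)) (s : Set ℕ) := by
  intro a ha b hb hab
  obtain ⟨-, -, hra⟩ := primepow_struct a (hs a ha)
  obtain ⟨-, -, hrb⟩ := primepow_struct b (hs b hb)
  simp only [Prod.mk.injEq] at hab
  calc a = a.minFac ^ a.factorization a.minFac := hra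
    _ = b.minFac ^ b.factorization b.minFac := by rw [hab.2, hab.1]
    _ = b := hrb.symm

lemma sum_minFac_inv (N : ℕ) (hN : 1 ≤ N) (P : ℕ → Prop) [DecidablePred P] :
    ∑ n ∈ (Finset.Icc 1 N).filter (fun n => IsPrimePow n ∧ P n), ((n.minFac : ℝ))⁻¹
    ≤ (Nat.log 2 N : ℝ) * (1 + Real.log N) := by
  classical
  set T := (Finset.Icc 1 N).filter (fun n => IsPrimePow n ∧ P n) with hT
  have hpp : ∀ n ∈ T, IsPrimePow n := by
    intro n hn; rw [hT, mem_filter] at hn; exact hn.2.1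
  set F : ℕ → ℕ × ℕ := fun n => (n.minFac, n.factorization n.minFac) with hF
  have h1 : ∑ n ∈ T, ((n.minFac : ℝ))⁻¹ = ∑ x ∈ T.image F, ((x.1 : ℝ))⁻¹ := by
    rw [Finset.sum_image]
    intro a ha b hb hab
    exact injOn_pp T hpp ha hb hab
  rw [h1]
  have hsub : T.image F ⊆ (Finset.Icc 1 N) ×ˢ (Finset.Icc 1 (Nat.log 2 N)) := by
    intro x hx
    rw [Finset.mem_image] at hx
    obtain ⟨n, hn, rfl⟩ := hx
    rw [hT, mem_filter, mem_Icc] at hn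
    obtain ⟨⟨hn1, hn2⟩, hpn, -⟩ := hn
    obtain ⟨g1, g2, g3⟩ := mem_product_of_pp hN hpn hn1 hn2
    simp only [hF]
    rw [Finset.mem_product, mem_Icc, mem_Icc]
    refine ⟨⟨?_, g1⟩, g2, g3⟩
    have h2 := (primepow_struct n hpn).1.two_le
    omega
  calc ∑ x ∈ T.image F, ((x.1 : ℝ))⁻¹
      ≤ ∑ x ∈ (Finset.Icc 1 N) ×ˢ (Finset.Icc 1 (Nat.log 2 N)), ((x.1 : ℝ))⁻¹ := by
        apply Finset.sum_le_sum_of_subset_of_nonneg hsub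
        intro x _ _; positivity
    _ = ∑ p ∈ Finset.Icc 1 N, ∑ a ∈ Finset.Icc 1 (Nat.log 2 N), ((p : ℝ))⁻¹ := by
        rw [Finset.sum_product]
    _ = (Nat.log 2 N : ℝ) * ∑ p ∈ Finset.Icc 1 N, ((p : ℝ))⁻¹ := by
        rw [Finset.mul_sum]
        apply Finset.sum_congr rfl
        intro p _
        rw [Finset.sum_const, nsmul_eq_mul, Nat.card_Icc]
        simp
    _ ≤ (Nat.log 2 N : ℝ) * (1 + Real.log N) := by
        apply mul_le_mul_of_nonneg_left (sum_inv_Icc_le N) (Nat.cast_nonneg _)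

lemma card_pp_dvd (N h : ℕ) (hh : 1 ≤ h) :
    (((Finset.Icc 1 N).filter (fun n => IsPrimePow n ∧ n.minFac ∣ h)).card : ℝ)
    ≤ (h : ℝ) * (Nat.log 2 N : ℝ) := by
  classical
  by_cases hN : 1 ≤ N
  case neg =>
    have : N = 0 := by omega
    subst this
    simp
  set T := (Finset.Icc 1 N).filter (fun n => IsPrimePow n ∧ n.minFac ∣ h) with hT
  have hpp : ∀ n ∈ T, IsPrimePow n := by
    intro n hn; rw [hT, mem_filter] at hn; exact hn.2.1
  have hcard : T.card ≤ ((Finset.Icc 1 h) ×ˢ (Finset.Icc 1 (Nat.log 2 N))).card := by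
    apply Finset.card_le_card_of_injOn (fun n => (n.minFac, n.factorization n.minFac))
    · intro n hn
      rw [Finset.mem_coe, hT, mem_filter, mem_Icc] at hn
      obtain ⟨⟨hn1, hn2⟩, hpn, hdvd⟩ := hn
      obtain ⟨g1, g2, g3⟩ := mem_product_of_pp hN hpn hn1 hn2
      rw [Finset.mem_coe, Finset.mem_product, mem_Icc, mem_Icc]
      have hple : n.minFac ≤ h := Nat.le_of_dvd (by omega) hdvd
      have := (primepow_struct n hpn).1.two_le
      exact ⟨⟨by show 1 ≤ n.minFac; omega, hple⟩, g2, g3⟩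
    · exact injOn_pp T hpp
  have : (T.card : ℝ) ≤ (((Finset.Icc 1 h) ×ˢ (Finset.Icc 1 (Nat.log 2 N))).card : ℝ) := by
    exact_mod_cast hcard
  refine this.trans (le_of_eq ?_)
  rw [Finset.card_product, Nat.card_Icc, Nat.card_Icc]
  push_cast
  simp

lemma inner_bound (N h n : ℕ) (hN : 1 ≤ N) (hh : 1 ≤ h) (hn1 : 1 ≤ n) (hn2 : n ≤ N)
    (hpp : IsPrimePow n) :
    ‖(∑ q ∈ (Finset.Icc 1 N).filter (fun q => 1 < Nat.gcd n q),
      (ArithmeticFunction.vonMangoldt n : ℂ) * (LamHat N q : ℂ) *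
        (cq q ((n : ℤ) + h) - cq q (n : ℤ) * cq q (h : ℤ) / (Nat.totient q : ℂ)))‖
    ≤ (1 + Real.log N) ^ 4 * (((n + h).divisors.card : ℝ) + 3 * (h : ℝ) * h) *
        (if n.minFac ∣ h then 1 else (n.minFac : ℝ)⁻¹) := by
  classical
  obtain ⟨hp, ha, hrep⟩ := primepow_struct n hpp
  set p := n.minFac with hp_def
  set LN := 1 + Real.log N with hLN
  have hLN0 : 0 ≤ Real.log N := Real.log_natCast_nonneg N
  have hLN1 : (1:ℝ) ≤ LN := by rw [hLN]; linarith
  have hp2 : 2 ≤ p := hp.two_le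
  have hpdvd : p ∣ n := Nat.minFac_dvd n
  have hlam0 : 0 ≤ ArithmeticFunction.vonMangoldt n := ArithmeticFunction.vonMangoldt_nonneg
  have hlamLN : ArithmeticFunction.vonMangoldt n ≤ LN := by
    calc ArithmeticFunction.vonMangoldt n ≤ Real.log n := ArithmeticFunction.vonMangoldt_le_log
      _ ≤ Real.log N := Real.log_le_log (by exact_mod_cast hn1) (by exact_mod_cast hn2)
      _ ≤ LN := by rw [hLN]; linarith
  set cp : ℝ := if p ∣ h then 1 else (p : ℝ)⁻¹ with hcp
  have hp0R : (0:ℝ) < p := by exact_mod_cast hp.pos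
  have hcp0 : 0 < cp := by
    rw [hcp]; split
    · norm_num
    · positivity
  have hcp1 : cp ≤ 1 := by
    rw [hcp]; split
    · exact le_refl 1
    · rw [inv_le_one_iff₀]; right; exact_mod_cast hp.one_lt.le
  have hinvcp : (p:ℝ)⁻¹ ≤ cp := by
    rw [hcp]; split
    · rw [inv_le_one_iff₀]; right; exact_mod_cast hp.one_lt.le
    · exact le_refl _
  set τs : ℕ → ℝ := fun q => ∑ d ∈ (Nat.divisors q).filter (fun d : ℕ => d ∣ (n + h)), (d : ℝ)
    with hτs
  have hτs0 : ∀ q, 0 ≤ τs q := by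
    intro q; apply Finset.sum_nonneg; intro d _; positivity
  set g : ℕ → ℝ := fun q => LN ^ 3 * ((q:ℝ)⁻¹ * τs q) + (LN ^ 3 * (3 * (h:ℝ) * h)) * (q:ℝ)⁻¹
    with hg
  have hg0 : ∀ q, 0 ≤ g q := by
    intro q
    have := hτs0 q
    have h3 : (0:ℝ) ≤ 3 * (h:ℝ) * h := by positivity
    have : (0:ℝ) ≤ (q:ℝ)⁻¹ := by positivity
    rw [hg]
    positivity
  set term : ℕ → ℂ := fun q => (ArithmeticFunction.vonMangoldt n : ℂ) * (LamHat N q : ℂ) *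
        (cq q ((n : ℤ) + h) - cq q (n : ℤ) * cq q (h : ℤ) / (Nat.totient q : ℂ)) with hterm
  set Qn := (Finset.Icc 1 N).filter (fun q => 1 < Nat.gcd n q) with hQn
  set Qs := Qn.filter (fun q => Squarefree q) with hQs
  set Qp := (Finset.Icc 1 N).filter (fun q => p ∣ q) with hQp
  have step1 : ‖(∑ q ∈ Qn, term q)‖ ≤ ∑ q ∈ Qn, ‖(term q)‖ :=
    norm_sum_le _ _
  have step2 : ∑ q ∈ Qn, ‖(term q)‖ = ∑ q ∈ Qs, ‖(term q)‖ := by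
    rw [hQs]
    symm
    apply Finset.sum_filter_of_ne
    intro q _ hne
    by_contra hnsq
    apply hne
    have hmu : (ArithmeticFunction.moebius q : ℝ) = 0 := by
      rw [ArithmeticFunction.moebius_eq_zero_of_not_squarefree hnsq]; norm_num
    have : LamHat N q = 0 := by rw [LamHat, hmu]; simp
    rw [hterm]
    simp [this]
  have hQsQp : Qs ⊆ Qp := by
    intro q hq
    rw [hQs, mem_filter, hQn, mem_filter] at hq
    obtain ⟨⟨hqIcc, hgcd⟩, hsq⟩ := hq
    rw [hQp, mem_filter]
    refine ⟨hqIcc, ?_⟩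
    set r := (Nat.gcd n q).minFac with hr_def
    have hr : r.Prime := Nat.minFac_prime (by omega)
    have hrdvd : r ∣ Nat.gcd n q := Nat.minFac_dvd _
    have hrn : r ∣ n := hrdvd.trans (Nat.gcd_dvd_left n q)
    have hrq : r ∣ q := hrdvd.trans (Nat.gcd_dvd_right n q)
    have hrp : r = p := by
      have h1 : r ∣ p ^ (n.factorization p) := by rw [← hrep]; exact hrn
      have h2 : r ∣ p := hr.dvd_of_dvd_pow h1
      exact (Nat.prime_dvd_prime_iff_eq hr hp).mp h2
    rw [← hrp]; exact hrq
  have step3 : ∀ q ∈ Qs, ‖(term q)‖ ≤ g q := by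
    intro q hq
    rw [hQs, mem_filter, hQn, mem_filter, mem_Icc] at hq
    obtain ⟨⟨⟨hq1, hqN⟩, hgcd⟩, hsq⟩ := hq
    have hpq : p ∣ q := by
      have := hQsQp (by rw [hQs, mem_filter, hQn, mem_filter, mem_Icc]; exact ⟨⟨⟨hq1, hqN⟩, hgcd⟩, hsq⟩)
      rw [hQp, mem_filter] at this
      exact this.2
    have hq0R : (0:ℝ) < q := by exact_mod_cast hq1
    -- totient bound
    have htot : (p:ℝ) - 1 ≤ (Nat.totient q : ℝ) := totient_ge q p hq1 hp hpq
    have htot0 : (0:ℝ) < (Nat.totient q : ℝ) := by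
      have : 0 < Nat.totient q := Nat.totient_pos.mpr (by omega)
      exact_mod_cast this
    -- bracket bound
    have hbr1 : ‖(cq q ((n : ℤ) + h))‖ ≤ τs q := by
      have hcast : ((n : ℤ) + h) = (((n + h : ℕ)) : ℤ) := by push_cast; ring
      rw [hcast, hτs]
      exact cq_abs_nat q (n + h) hq1
    have hbr2 : ‖(cq q (n : ℤ) * cq q (h : ℤ) / (Nat.totient q : ℂ))‖
        ≤ 3 * (h:ℝ) * h := by
      rw [norm_div, norm_mul]
      have h1 : ‖(cq q (n : ℤ))‖ ≤ 1 + (p:ℝ) := by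
        have : (n : ℤ) = ((p ^ (n.factorization p) : ℕ) : ℤ) := by rw [← hrep]
        rw [this]
        exact cq_abs_pp_le q p _ hq1 hsq hp
      have h2 : ‖(cq q (h : ℤ))‖ ≤ (h:ℝ) * h := cq_abs_h_le q h hq1 hh
      have h3 : ‖((Nat.totient q : ℂ))‖ = (Nat.totient q : ℝ) := by
        rw [Complex.norm_natCast]
      rw [h3]
      have hnum : ‖(cq q (n : ℤ))‖ * ‖(cq q (h : ℤ))‖
          ≤ (1 + (p:ℝ)) * ((h:ℝ) * h) := by
        apply mul_le_mul h1 h2 (norm_nonneg _) (by positivity)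
      calc ‖(cq q (n : ℤ))‖ * ‖(cq q (h : ℤ))‖ / (Nat.totient q : ℝ)
          ≤ (1 + (p:ℝ)) * ((h:ℝ) * h) / (Nat.totient q : ℝ) := by
            gcongr
        _ ≤ (1 + (p:ℝ)) * ((h:ℝ) * h) / ((p:ℝ) - 1) := by
            have hpge : (2:ℝ) ≤ (p:ℝ) := by exact_mod_cast hp2
            apply div_le_div_of_nonneg_left (by positivity) (by linarith) htot
        _ ≤ 3 * (h:ℝ) * h := by
            have hpge : (2:ℝ) ≤ (p:ℝ) := by exact_mod_cast hp2
            rw [div_le_iff₀ (by linarith : (0:ℝ) < (p:ℝ) - 1)]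
            nlinarith [sq_nonneg ((h:ℝ))]
    have hbr : ‖(cq q ((n : ℤ) + h) - cq q (n : ℤ) * cq q (h : ℤ) / (Nat.totient q : ℂ))‖
        ≤ τs q + 3 * (h:ℝ) * h := by
      calc ‖(cq q ((n : ℤ) + h) - cq q (n : ℤ) * cq q (h : ℤ) / (Nat.totient q : ℂ))‖
          ≤ ‖(cq q ((n : ℤ) + h))‖
            + ‖(cq q (n : ℤ) * cq q (h : ℤ) / (Nat.totient q : ℂ))‖ :=
            norm_sub_le _ _
        _ ≤ τs q + 3 * (h:ℝ) * h := add_le_add hbr1 hbr2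
    have hLamHat : |LamHat N q| ≤ LN ^ 2 / q := by
      rw [hLN]; exact LamHat_abs_le N q hq1 hN
    rw [hterm]
    simp only
    rw [norm_mul, norm_mul]
    have e1 : ‖((ArithmeticFunction.vonMangoldt n : ℝ) : ℂ)‖
        = ArithmeticFunction.vonMangoldt n := by
      rw [Complex.norm_real, Real.norm_eq_abs, abs_of_nonneg hlam0]
    have e2 : ‖((LamHat N q : ℝ) : ℂ)‖ = |LamHat N q| := by rw [Complex.norm_real, Real.norm_eq_abs]
    rw [e1, e2]
    calc ArithmeticFunction.vonMangoldt n * |LamHat N q| *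
          ‖(cq q ((n : ℤ) + h) - cq q (n : ℤ) * cq q (h : ℤ) / (Nat.totient q : ℂ))‖
        ≤ LN * (LN ^ 2 / q) * (τs q + 3 * (h:ℝ) * h) := by
          apply mul_le_mul
          · apply mul_le_mul hlamLN hLamHat (abs_nonneg _) (by linarith)
          · exact hbr
          · exact norm_nonneg _
          · positivity
      _ = g q := by rw [hg]; field_simp
  have step4 : ∑ q ∈ Qs, ‖(term q)‖ ≤ ∑ q ∈ Qp, g q := by
    calc ∑ q ∈ Qs, ‖(term q)‖ ≤ ∑ q ∈ Qs, g q := Finset.sum_le_sum step3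
      _ ≤ ∑ q ∈ Qp, g q := Finset.sum_le_sum_of_subset_of_nonneg hQsQp (fun q _ _ => hg0 q)
  have step5 : ∑ q ∈ Qp, g q ≤ LN ^ 4 * (((n + h).divisors.card : ℝ) + 3 * (h:ℝ) * h) * cp := by
    have hsplit : ∑ q ∈ Qp, g q = LN ^ 3 * (∑ q ∈ Qp, (q:ℝ)⁻¹ * τs q)
        + (LN ^ 3 * (3 * (h:ℝ) * h)) * (∑ q ∈ Qp, (q:ℝ)⁻¹) := by
      rw [hg, Finset.sum_add_distrib, Finset.mul_sum, Finset.mul_sum]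
    have hs1 : ∑ q ∈ Qp, (q:ℝ)⁻¹ * τs q
        ≤ ((n + h).divisors.card : ℝ) * LN * cp := by
      have hswap := swap_bound N p (n + h) hp (by omega)
      have hiff : (if p ∣ (n + h) then (1:ℝ) else (p : ℝ)⁻¹) = cp := by
        have : p ∣ (n + h) ↔ p ∣ h := by
          constructor
          · intro hd; exact (Nat.dvd_add_right hpdvd).mp hd
          · intro hd; exact Nat.dvd_add hpdvd hd
        rw [hcp]
        by_cases hch : p ∣ h
        · rw [if_pos (this.mpr hch), if_pos hch]
        · rw [if_neg (fun hc => hch (this.mp hc)), if_neg hch]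
      calc ∑ q ∈ Qp, (q:ℝ)⁻¹ * τs q
          ≤ ((n+h).divisors.card : ℝ) * (1 + Real.log N) * (if p ∣ (n + h) then (1:ℝ) else (p : ℝ)⁻¹) := hswap
        _ = ((n + h).divisors.card : ℝ) * LN * cp := by rw [hiff, hLN]
    have hs2 : ∑ q ∈ Qp, (q:ℝ)⁻¹ ≤ LN * cp := by
      calc ∑ q ∈ Qp, (q:ℝ)⁻¹ ≤ (1 + Real.log N) / p := sum_inv_multiples N p (by omega)
        _ = LN * (p:ℝ)⁻¹ := by rw [hLN]; ring
        _ ≤ LN * cp := by apply mul_le_mul_of_nonneg_left hinvcp (by linarith)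
    rw [hsplit]
    have e1 : LN ^ 3 * (((n + h).divisors.card : ℝ) * LN * cp)
        + (LN ^ 3 * (3 * (h:ℝ) * h)) * (LN * cp)
        = LN ^ 4 * (((n + h).divisors.card : ℝ) + 3 * (h:ℝ) * h) * cp := by ring
    rw [← e1]
    apply add_le_add
    · apply mul_le_mul_of_nonneg_left hs1 (by positivity)
    · apply mul_le_mul_of_nonneg_left hs2 (by positivity)
  calc ‖(∑ q ∈ Qn, term q)‖ ≤ ∑ q ∈ Qn, ‖(term q)‖ := step1
    _ = ∑ q ∈ Qs, ‖(term q)‖ := step2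
    _ ≤ ∑ q ∈ Qp, g q := step4
    _ ≤ LN ^ 4 * (((n + h).divisors.card : ℝ) + 3 * (h:ℝ) * h) * cp := step5

end AuxLemmas

/-- `ℛ(N,h) ≪_ε (N+h)^ε`. -/
theorem stmt8 : ∀ ε : ℝ, 0 < ε → ∀ h : ℕ, 1 ≤ h → ∃ K : ℝ, ∃ N₀ : ℕ, ∀ N : ℕ, N₀ ≤ N →
    ‖RR N h‖ ≤ K * ((N : ℝ) + (h : ℝ)) ^ ε := by
  intro ε hε h hh
  classical
  obtain ⟨D, hD1, hD⟩ := card_divisors_le (ε/2) (by positivity)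
  obtain ⟨Cl, hCl1, hCl⟩ := one_add_log_le (ε/12) (by positivity)
  refine ⟨2 * (1 + (h:ℝ)) * (D + 3 * (h:ℝ) * h) * Cl ^ 6, 1, ?_⟩
  intro N hN
  set LN := 1 + Real.log N with hLN
  have hLN0 : 0 ≤ Real.log N := Real.log_natCast_nonneg N
  have hLN1 : (1:ℝ) ≤ LN := by rw [hLN]; linarith
  set L := Nat.log 2 N with hL
  set A := ((N:ℝ) + (h:ℝ)) ^ (ε/2) with hA
  have hNh1 : (1:ℝ) ≤ (N:ℝ) + (h:ℝ) := by
    have : (1:ℝ) ≤ (N:ℝ) := by exact_mod_cast hN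
    have : (0:ℝ) ≤ (h:ℝ) := Nat.cast_nonneg h
    linarith
  have hA1 : (1:ℝ) ≤ A := Real.one_le_rpow hNh1 (by positivity)
  have hA0 : (0:ℝ) < A := by linarith
  set B : ℝ := LN ^ 4 * (D + 3 * (h:ℝ) * h) * A with hB
  have hB0 : 0 ≤ B := by
    rw [hB]
    have : (0:ℝ) ≤ D := by linarith
    positivity
  -- per-n bound
  have hper : ∀ n ∈ (Finset.Icc 1 N).filter (fun n => IsPrimePow n),
      ‖(∑ q ∈ (Finset.Icc 1 N).filter (fun q => 1 < Nat.gcd n q),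
        (ArithmeticFunction.vonMangoldt n : ℂ) * (LamHat N q : ℂ) *
          (cq q ((n : ℤ) + h) - cq q (n : ℤ) * cq q (h : ℤ) / (Nat.totient q : ℂ)))‖
      ≤ B * (if n.minFac ∣ h then 1 else (n.minFac : ℝ)⁻¹) := by
    intro n hn
    rw [mem_filter, mem_Icc] at hn
    obtain ⟨⟨hn1, hn2⟩, hpp⟩ := hn
    refine (inner_bound N h n hN hh hn1 hn2 hpp).trans ?_
    have hτ : (((n + h).divisors.card : ℕ) : ℝ) + 3 * (h:ℝ) * h ≤ (D + 3 * (h:ℝ) * h) * A := by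
      have h1 : (((n + h).divisors.card : ℕ) : ℝ) ≤ D * ((n + h : ℕ) : ℝ) ^ (ε/2) :=
        hD (n + h) (by omega)
      have h2 : ((n + h : ℕ) : ℝ) ^ (ε/2) ≤ A := by
        rw [hA]
        apply Real.rpow_le_rpow (by positivity) _ (by positivity)
        push_cast
        have : (n:ℝ) ≤ (N:ℝ) := by exact_mod_cast hn2
        linarith
      have h3 : (((n + h).divisors.card : ℕ) : ℝ) ≤ D * A := by
        calc (((n + h).divisors.card : ℕ) : ℝ) ≤ D * ((n + h : ℕ) : ℝ) ^ (ε/2) := h1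
          _ ≤ D * A := by apply mul_le_mul_of_nonneg_left h2 (by linarith)
      have h4 : 3 * (h:ℝ) * h ≤ 3 * (h:ℝ) * h * A := by
        nlinarith [hA1, sq_nonneg (h:ℝ)]
      calc (((n + h).divisors.card : ℕ) : ℝ) + 3 * (h:ℝ) * h ≤ D * A + 3 * (h:ℝ) * h * A := by
            linarith
        _ = (D + 3 * (h:ℝ) * h) * A := by ring
    rw [hB]
    set cpn := (if n.minFac ∣ h then (1:ℝ) else (n.minFac : ℝ)⁻¹) with hcpn
    have hcpn0 : 0 ≤ cpn := by
      rw [hcpn]; split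
      · norm_num
      · positivity
    calc LN ^ 4 * ((((n + h).divisors.card : ℕ) : ℝ) + 3 * (h:ℝ) * h) * cpn
        ≤ LN ^ 4 * ((D + 3 * (h:ℝ) * h) * A) * cpn := by
          apply mul_le_mul_of_nonneg_right _ hcpn0
          apply mul_le_mul_of_nonneg_left hτ (by positivity)
      _ = LN ^ 4 * (D + 3 * (h:ℝ) * h) * A * cpn := by ring
  -- main chain
  have main1 : ‖RR N h‖ ≤
      ∑ n ∈ (Finset.Icc 1 N).filter (fun n => IsPrimePow n),
        B * (if n.minFac ∣ h then 1 else (n.minFac : ℝ)⁻¹) := by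
    rw [RR]
    refine (norm_sum_le _ _).trans ?_
    have hzero : ∀ n ∈ Finset.Icc 1 N,
        ‖(∑ q ∈ (Finset.Icc 1 N).filter (fun q => 1 < Nat.gcd n q),
          (ArithmeticFunction.vonMangoldt n : ℂ) * (LamHat N q : ℂ) *
            (cq q ((n : ℤ) + h) - cq q (n : ℤ) * cq q (h : ℤ) / (Nat.totient q : ℂ)))‖ ≠ 0
          → IsPrimePow n := by
      intro n _ hne
      by_contra hcon
      apply hne
      have hlam : ArithmeticFunction.vonMangoldt n = 0 := by
        by_contra hl
        exact hcon (ArithmeticFunction.vonMangoldt_ne_zero_iff.mp hl)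
      simp [hlam]
    calc ∑ n ∈ Finset.Icc 1 N,
          ‖(∑ q ∈ (Finset.Icc 1 N).filter (fun q => 1 < Nat.gcd n q),
            (ArithmeticFunction.vonMangoldt n : ℂ) * (LamHat N q : ℂ) *
              (cq q ((n : ℤ) + h) - cq q (n : ℤ) * cq q (h : ℤ) / (Nat.totient q : ℂ)))‖
        = ∑ n ∈ (Finset.Icc 1 N).filter (fun n => IsPrimePow n),
          ‖(∑ q ∈ (Finset.Icc 1 N).filter (fun q => 1 < Nat.gcd n q),
            (ArithmeticFunction.vonMangoldt n : ℂ) * (LamHat N q : ℂ) *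
              (cq q ((n : ℤ) + h) - cq q (n : ℤ) * cq q (h : ℤ) / (Nat.totient q : ℂ)))‖ := by
          symm
          exact Finset.sum_filter_of_ne hzero
      _ ≤ ∑ n ∈ (Finset.Icc 1 N).filter (fun n => IsPrimePow n),
          B * (if n.minFac ∣ h then 1 else (n.minFac : ℝ)⁻¹) := Finset.sum_le_sum hper
  -- split the sum
  have main2 : ∑ n ∈ (Finset.Icc 1 N).filter (fun n => IsPrimePow n),
      B * (if n.minFac ∣ h then 1 else (n.minFac : ℝ)⁻¹)
      ≤ B * ((h:ℝ) * L) + B * ((L:ℝ) * LN) := by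
    rw [← Finset.sum_filter_add_sum_filter_not
      ((Finset.Icc 1 N).filter (fun n => IsPrimePow n)) (fun n => n.minFac ∣ h)]
    apply add_le_add
    · have heq : ((Finset.Icc 1 N).filter (fun n => IsPrimePow n)).filter (fun n => n.minFac ∣ h)
          = (Finset.Icc 1 N).filter (fun n => IsPrimePow n ∧ n.minFac ∣ h) := by
        rw [Finset.filter_filter]
      rw [heq]
      calc ∑ n ∈ (Finset.Icc 1 N).filter (fun n => IsPrimePow n ∧ n.minFac ∣ h),
            B * (if n.minFac ∣ h then 1 else (n.minFac : ℝ)⁻¹)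
          ≤ ∑ n ∈ (Finset.Icc 1 N).filter (fun n => IsPrimePow n ∧ n.minFac ∣ h), B := by
            apply Finset.sum_le_sum
            intro n hn
            rw [mem_filter] at hn
            rw [if_pos hn.2.2]
            simp
        _ = (((Finset.Icc 1 N).filter (fun n => IsPrimePow n ∧ n.minFac ∣ h)).card : ℝ) * B := by
            rw [Finset.sum_const, nsmul_eq_mul]
        _ ≤ ((h:ℝ) * L) * B := by
            apply mul_le_mul_of_nonneg_right (card_pp_dvd N h hh) hB0
        _ = B * ((h:ℝ) * L) := by ring
    · have heq : ((Finset.Icc 1 N).filter (fun n => IsPrimePow n)).filter (fun n => ¬ n.minFac ∣ h)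
          = (Finset.Icc 1 N).filter (fun n => IsPrimePow n ∧ ¬ n.minFac ∣ h) := by
        rw [Finset.filter_filter]
      rw [heq]
      calc ∑ n ∈ (Finset.Icc 1 N).filter (fun n => IsPrimePow n ∧ ¬ n.minFac ∣ h),
            B * (if n.minFac ∣ h then 1 else (n.minFac : ℝ)⁻¹)
          = B * ∑ n ∈ (Finset.Icc 1 N).filter (fun n => IsPrimePow n ∧ ¬ n.minFac ∣ h),
              ((n.minFac : ℝ))⁻¹ := by
            rw [Finset.mul_sum]
            apply Finset.sum_congr rfl
            intro n hn
            rw [mem_filter] at hn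
            rw [if_neg hn.2.2]
        _ ≤ B * ((L:ℝ) * LN) := by
            apply mul_le_mul_of_nonneg_left _ hB0
            rw [hL, hLN]
            exact sum_minFac_inv N hN (fun n => ¬ n.minFac ∣ h)
  -- conclude
  have hLcast : (L : ℝ) ≤ 2 * LN := by
    have h2L : (2:ℕ) ^ L ≤ N := by
      rw [hL]
      exact Nat.pow_log_le_self 2 (by omega)
    have h2LR : ((2:ℝ)) ^ (L:ℕ) ≤ (N:ℝ) := by exact_mod_cast h2L
    have hlog : (L:ℝ) * Real.log 2 ≤ Real.log N := by
      calc (L:ℝ) * Real.log 2 = Real.log ((2:ℝ) ^ (L:ℕ)) := by rw [Real.log_pow]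
        _ ≤ Real.log N := Real.log_le_log (by positivity) h2LR
    have hlog2 : (1/2 : ℝ) ≤ Real.log 2 := by
      have := Real.log_two_gt_d9
      linarith
    nlinarith [Nat.cast_nonneg (α := ℝ) L]
  have main3 : B * ((h:ℝ) * L) + B * ((L:ℝ) * LN) ≤ B * (2 * LN) * (LN * (1 + (h:ℝ))) := by
    have hh0 : (1:ℝ) ≤ (h:ℝ) := by exact_mod_cast hh
    have hL0 : (0:ℝ) ≤ (L:ℝ) := Nat.cast_nonneg L
    have e1 : B * ((h:ℝ) * L) ≤ B * (2 * LN) * ((h:ℝ) * LN) := by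
      calc B * ((h:ℝ) * L) ≤ B * ((h:ℝ) * (2 * LN)) := by
            apply mul_le_mul_of_nonneg_left _ hB0
            apply mul_le_mul_of_nonneg_left hLcast (by linarith)
        _ ≤ B * (2 * LN) * ((h:ℝ) * LN) := by
            nlinarith [mul_nonneg (mul_nonneg hB0 (by linarith : (0:ℝ) ≤ 2 * LN))
              (by linarith : (0:ℝ) ≤ (h:ℝ)), hLN1]
    have e2 : B * ((L:ℝ) * LN) ≤ B * (2 * LN) * LN := by
      calc B * ((L:ℝ) * LN) ≤ B * ((2 * LN) * LN) := by
            apply mul_le_mul_of_nonneg_left _ hB0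
            apply mul_le_mul_of_nonneg_right hLcast (by linarith)
        _ = B * (2 * LN) * LN := by ring
    have : B * (2 * LN) * (LN * (1 + (h:ℝ))) = B * (2 * LN) * ((h:ℝ) * LN) + B * (2 * LN) * LN := by
      ring
    rw [this]
    exact add_le_add e1 e2
  have hLN6 : LN ^ 6 ≤ Cl ^ 6 * ((N:ℝ) + (h:ℝ)) ^ (ε/2) := by
    have hN1 : (1:ℝ) ≤ (N:ℝ) := by exact_mod_cast hN
    have h1 : LN ≤ Cl * (N:ℝ) ^ (ε/12) := hCl N hN1
    have h2 : LN ^ 6 ≤ (Cl * (N:ℝ) ^ (ε/12)) ^ 6 := by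
      apply pow_le_pow_left₀ (by linarith) h1
    have h3 : (Cl * (N:ℝ) ^ (ε/12)) ^ 6 = Cl ^ 6 * ((N:ℝ) ^ (ε/12)) ^ 6 := by ring
    have h4 : ((N:ℝ) ^ (ε/12)) ^ (6:ℕ) = (N:ℝ) ^ (ε/2) := by
      rw [← Real.rpow_natCast ((N:ℝ) ^ (ε/12)) 6, ← Real.rpow_mul (by positivity)]
      congr 1
      ring
    have h5 : (N:ℝ) ^ (ε/2) ≤ ((N:ℝ) + (h:ℝ)) ^ (ε/2) := by
      apply Real.rpow_le_rpow (by positivity) (le_add_of_nonneg_right (Nat.cast_nonneg h))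
        (by positivity)
    calc LN ^ 6 ≤ (Cl * (N:ℝ) ^ (ε/12)) ^ 6 := h2
      _ = Cl ^ 6 * ((N:ℝ) ^ (ε/12)) ^ 6 := h3
      _ = Cl ^ 6 * (N:ℝ) ^ (ε/2) := by rw [h4]
      _ ≤ Cl ^ 6 * ((N:ℝ) + (h:ℝ)) ^ (ε/2) := by
          apply mul_le_mul_of_nonneg_left h5 (by positivity)
  have hAA : A * A = ((N:ℝ) + (h:ℝ)) ^ ε := by
    rw [hA, ← Real.rpow_add (by linarith : (0:ℝ) < (N:ℝ) + (h:ℝ))]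
    norm_num
  have final : B * (2 * LN) * (LN * (1 + (h:ℝ)))
      ≤ 2 * (1 + (h:ℝ)) * (D + 3 * (h:ℝ) * h) * Cl ^ 6 * ((N : ℝ) + (h : ℝ)) ^ ε := by
    have hD0 : (0:ℝ) ≤ D := by linarith
    have hh0 : (0:ℝ) ≤ (h:ℝ) := Nat.cast_nonneg h
    have e1 : B * (2 * LN) * (LN * (1 + (h:ℝ)))
        = 2 * (1 + (h:ℝ)) * (D + 3 * (h:ℝ) * h) * (LN ^ 6 * A) := by
      rw [hB]; ring
    rw [e1]
    have e2 : LN ^ 6 * A ≤ Cl ^ 6 * ((N:ℝ) + (h:ℝ)) ^ (ε/2) * A := by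
      apply mul_le_mul_of_nonneg_right hLN6 (by linarith)
    have e3 : Cl ^ 6 * ((N:ℝ) + (h:ℝ)) ^ (ε/2) * A = Cl ^ 6 * (A * A) := by
      rw [hA]; ring
    have e4 : LN ^ 6 * A ≤ Cl ^ 6 * ((N:ℝ) + (h:ℝ)) ^ ε := by
      rw [← hAA]
      calc LN ^ 6 * A ≤ Cl ^ 6 * ((N:ℝ) + (h:ℝ)) ^ (ε/2) * A := e2
        _ = Cl ^ 6 * (A * A) := e3
    calc 2 * (1 + (h:ℝ)) * (D + 3 * (h:ℝ) * h) * (LN ^ 6 * A)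
        ≤ 2 * (1 + (h:ℝ)) * (D + 3 * (h:ℝ) * h) * (Cl ^ 6 * ((N:ℝ) + (h:ℝ)) ^ ε) := by
          apply mul_le_mul_of_nonneg_left e4 (by positivity)
      _ = 2 * (1 + (h:ℝ)) * (D + 3 * (h:ℝ) * h) * Cl ^ 6 * ((N : ℝ) + (h : ℝ)) ^ ε := by ring
  calc ‖RR N h‖
      ≤ ∑ n ∈ (Finset.Icc 1 N).filter (fun n => IsPrimePow n),
        B * (if n.minFac ∣ h then 1 else (n.minFac : ℝ)⁻¹) := main1
    _ ≤ B * ((h:ℝ) * L) + B * ((L:ℝ) * LN) := main2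
    _ ≤ B * (2 * LN) * (LN * (1 + (h:ℝ))) := main3
    _ ≤ 2 * (1 + (h:ℝ)) * (D + 3 * (h:ℝ) * h) * Cl ^ 6 * ((N : ℝ) + (h : ℝ)) ^ ε := final
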